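/- arXiv:2007.12219 — 2 statements merged into one kernel-verified Lean document; each statement's English description precedes it below -/
import Mathlib

section
/- For every k ≥ 0, ⟨∇_u G(u^k,v^k), u^{k+1} − u^k⟩ + J(u^{k+1}) − J(u^k) + ⟨q^k, Θ(u^{k+1}) − Θ(u^k)⟩ ≤ −(β/(2ε^k) − ‖q^k‖L_Ω/2)‖u^k − u^{k+1}‖². -/
open scoped RealInnerProductSpace BigOperators
open Filter

noncomputable section

/-- Problem data for the NAPP-AL method applied to
`min G(u,v)+J(u)+H(v)  s.t.  Ω(u)+Φ(u)+Bv = 0, u ∈ U`. -/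
structure NAPP (n d m : ℕ) where
  /-- the closed convex constraint set -/
  U : Set (EuclideanSpace ℝ (Fin n))
  G : EuclideanSpace ℝ (Fin n) → EuclideanSpace ℝ (Fin d) → ℝ
  /-- partial gradient of `G` in `u` -/
  Gu : EuclideanSpace ℝ (Fin n) → EuclideanSpace ℝ (Fin d) → EuclideanSpace ℝ (Fin n)
  /-- partial gradient of `G` in `v` -/
  Gv : EuclideanSpace ℝ (Fin n) → EuclideanSpace ℝ (Fin d) → EuclideanSpace ℝ (Fin d)
  H : EuclideanSpace ℝ (Fin d) → ℝ
  /-- gradient of `H` -/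
  Hg : EuclideanSpace ℝ (Fin d) → EuclideanSpace ℝ (Fin d)
  J : EuclideanSpace ℝ (Fin n) → ℝ
  /-- Ω -/
  Om : EuclideanSpace ℝ (Fin n) → EuclideanSpace ℝ (Fin m)
  /-- Jacobian of Ω -/
  Omd : EuclideanSpace ℝ (Fin n) → (EuclideanSpace ℝ (Fin n) →L[ℝ] EuclideanSpace ℝ (Fin m))
  /-- gradient of the `j`-th component of Ω -/
  Omg : Fin m → EuclideanSpace ℝ (Fin n) → EuclideanSpace ℝ (Fin n)
  /-- Φ -/
  Phi : EuclideanSpace ℝ (Fin n) → EuclideanSpace ℝ (Fin m)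
  /-- Jacobian of Φ -/
  Phid : EuclideanSpace ℝ (Fin n) → (EuclideanSpace ℝ (Fin n) →L[ℝ] EuclideanSpace ℝ (Fin m))
  B : EuclideanSpace ℝ (Fin d) →L[ℝ] EuclideanSpace ℝ (Fin m)
  K : EuclideanSpace ℝ (Fin n) → ℝ
  /-- gradient of `K` -/
  Kg : EuclideanSpace ℝ (Fin n) → EuclideanSpace ℝ (Fin n)
  LG : ℝ
  LH : ℝ
  LK : ℝ
  /-- `L⁰_Θ` -/
  LT : ℝ
  /-- Lipschitz constants of the component gradients of Ω -/
  LOmj : Fin m → ℝ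
  beta : ℝ
  /-- `μ > 0` with `‖Bx‖² ≥ μ‖x‖²` and `‖Bᵀy‖² ≥ μ‖y‖²` on `Im B` -/
  mu : ℝ
  gamma : ℝ

namespace NAPP

variable {n d m : ℕ}

/-- `Θ = Ω + Φ` -/
def Th (S : NAPP n d m) (u : EuclideanSpace ℝ (Fin n)) : EuclideanSpace ℝ (Fin m) :=
  S.Om u + S.Phi u

/-- Jacobian of `Θ` -/
def Thd (S : NAPP n d m) (u : EuclideanSpace ℝ (Fin n)) :
    EuclideanSpace ℝ (Fin n) →L[ℝ] EuclideanSpace ℝ (Fin m) :=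
  S.Omd u + S.Phid u

/-- the Bregman distance associated with `K` -/
def D (S : NAPP n d m) (u u' : EuclideanSpace ℝ (Fin n)) : ℝ :=
  S.K u - S.K u' - ⟪S.Kg u', u - u'⟫

/-- `L_Ω := Σ_j L_{Ω_j}` -/
def LOm (S : NAPP n d m) : ℝ := ∑ j, S.LOmj j

/-- the overall objective `F(u,v) = G(u,v) + J(u) + H(v)` -/
def F (S : NAPP n d m) (u : EuclideanSpace ℝ (Fin n)) (v : EuclideanSpace ℝ (Fin d)) : ℝ :=
  S.G u v + S.J u + S.H v

/-- the augmented Lagrangian `L_γ` -/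
def Lag (S : NAPP n d m) (u : EuclideanSpace ℝ (Fin n)) (v : EuclideanSpace ℝ (Fin d))
    (p : EuclideanSpace ℝ (Fin m)) : ℝ :=
  S.F u v + ⟪p, S.Th u + S.B v⟫ + S.gamma / 2 * ‖S.Th u + S.B v‖ ^ 2

def c1 (S : NAPP n d m) : ℝ := 7 * (S.LG + S.gamma * ‖S.B‖ * S.LT) ^ 2 / (S.gamma * S.mu)

def c2 (S : NAPP n d m) : ℝ := 7 * (S.LG + S.LH) ^ 2 / (S.gamma * S.mu)

def c4 (S : NAPP n d m) : ℝ := (S.gamma * S.mu - (S.LG + S.LH)) / 2 - S.c2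

def c3 (S : NAPP n d m) : ℝ := min (1 / 2) (min S.c4 (1 / (3 * S.gamma)))

/-- The standing assumptions (H₁)–(H₆) together with the properties of `K`, `μ` and `γ > 0`. -/
structure Hyp (S : NAPP n d m) : Prop where
  closedU : IsClosed S.U
  convexU : Convex ℝ S.U
  gradGu : ∀ u v, HasGradientAt (fun x => S.G x v) (S.Gu u v) u
  gradGv : ∀ u v, HasGradientAt (fun y => S.G u y) (S.Gv u v) v
  lipG : ∀ u v u' v', ‖S.Gu u v - S.Gu u' v'‖ ^ 2 + ‖S.Gv u v - S.Gv u' v'‖ ^ 2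
      ≤ S.LG ^ 2 * (‖u - u'‖ ^ 2 + ‖v - v'‖ ^ 2)
  gradH : ∀ v, HasGradientAt S.H (S.Hg v) v
  lipH : ∀ v v', ‖S.Hg v - S.Hg v'‖ ≤ S.LH * ‖v - v'‖
  lscJ : LowerSemicontinuous S.J
  derivOm : ∀ u, HasFDerivAt S.Om (S.Omd u) u
  derivPhi : ∀ u, HasFDerivAt S.Phi (S.Phid u) u
  gradOmj : ∀ (j : Fin m) u, HasGradientAt (fun x => S.Om x j) (S.Omg j u) u
  lipOmj : ∀ (j : Fin m) u u', ‖S.Omg j u - S.Omg j u'‖ ≤ S.LOmj j * ‖u - u'‖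
  lipTh : ∀ u u', ‖S.Th u - S.Th u'‖ ≤ S.LT * ‖u - u'‖
  injB : Function.Injective S.B
  imTh : ∀ u, ∃ v, S.B v = S.Th u
  muPos : 0 < S.mu
  muB : ∀ x, S.mu * ‖x‖ ^ 2 ≤ ‖S.B x‖ ^ 2
  muBt : ∀ y : EuclideanSpace ℝ (Fin m), (∃ x, S.B x = y) →
      S.mu * ‖y‖ ^ 2 ≤ ‖(ContinuousLinearMap.adjoint S.B) y‖ ^ 2
  betaPos : 0 < S.beta
  strongK : ∀ x y, S.beta / 2 * ‖x - y‖ ^ 2 ≤ S.K x - S.K y - ⟪S.Kg y, x - y⟫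
  gradK : ∀ u, HasGradientAt S.K (S.Kg u) u
  lipK : ∀ u u', ‖S.Kg u - S.Kg u'‖ ≤ S.LK * ‖u - u'‖
  gammaPos : 0 < S.gamma

/-- The NAPP-AL iterates `w^k = (u^k, v^k, p^k)` with step sizes `ε^k > 0`. -/
structure Iter (S : NAPP n d m) where
  u : ℕ → EuclideanSpace ℝ (Fin n)
  v : ℕ → EuclideanSpace ℝ (Fin d)
  p : ℕ → EuclideanSpace ℝ (Fin m)
  eps : ℕ → ℝ
  epsPos : ∀ k, 0 < eps k
  uMem : ∀ k, u k ∈ S.U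
  /-- `u^{k+1}` minimizes the linearized augmented Lagrangian over `U` -/
  uMin : ∀ k, ∀ x ∈ S.U,
      ⟪S.Gu (u k) (v k), u (k + 1)⟫ + S.J (u (k + 1))
        + ⟪p k + S.gamma • (S.Th (u k) + S.B (v k)),
            S.Omd (u k) (u (k + 1)) + S.Phi (u (k + 1))⟫
        + (1 / eps k) * S.D (u (k + 1)) (u k)
      ≤ ⟪S.Gu (u k) (v k), x⟫ + S.J x
        + ⟪p k + S.gamma • (S.Th (u k) + S.B (v k)), S.Omd (u k) x + S.Phi x⟫
        + (1 / eps k) * S.D x (u k)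
  /-- the first-order equation defining `v^{k+1}` -/
  vEq : ∀ k, (0 : EuclideanSpace ℝ (Fin d))
      = S.Gv (u k) (v k) + S.Hg (v k)
        + (ContinuousLinearMap.adjoint S.B) (p k + S.gamma • (S.Th (u k) + S.B (v k)))
        + S.gamma • (ContinuousLinearMap.adjoint S.B) (S.B (v (k + 1) - v k))
  /-- the dual update -/
  pEq : ∀ k, p (k + 1) = p k + S.gamma • (S.Th (u (k + 1)) + S.B (v (k + 1)))

variable {S : NAPP n d m}

/-- `q^k = p^k + γ(Θ(u^k) + Bv^k)` -/
def Iter.q (it : Iter S) (k : ℕ) : EuclideanSpace ℝ (Fin m) :=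
  it.p k + S.gamma • (S.Th (it.u k) + S.B (it.v k))

/-- `‖w^k - w^{k+1}‖²` -/
def Iter.wsq (it : Iter S) (k : ℕ) : ℝ :=
  ‖it.u k - it.u (k + 1)‖ ^ 2 + ‖it.v k - it.v (k + 1)‖ ^ 2 + ‖it.p k - it.p (k + 1)‖ ^ 2

/-- `‖w^k - w^{k+1}‖` -/
def Iter.wnorm (it : Iter S) (k : ℕ) : ℝ := Real.sqrt (it.wsq k)

/-- distance from `w^k` to a given point `(ub, vb, pb)` -/
def Iter.distTo (it : Iter S) (k : ℕ) (ub : EuclideanSpace ℝ (Fin n))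
    (vb : EuclideanSpace ℝ (Fin d)) (pb : EuclideanSpace ℝ (Fin m)) : ℝ :=
  Real.sqrt (‖it.u k - ub‖ ^ 2 + ‖it.v k - vb‖ ^ 2 + ‖it.p k - pb‖ ^ 2)

/-- the step-size cap `δ_k` -/
def Iter.delta (it : Iter S) (k : ℕ) : ℝ :=
  S.beta / (S.LG + ‖it.q k‖ * S.LOm + S.gamma * S.LT ^ 2
    + 14 * S.gamma * ‖S.B‖ ^ 2 * S.LT ^ 2 / S.mu
    + 14 * (S.LG + S.gamma * ‖S.B‖ * S.LT) ^ 2 / (S.gamma * S.mu) + 1)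

/-- the potential `Λ^k` (for `k ≥ 1`, using truncated subtraction `k - 1`) -/
def Iter.Lam (it : Iter S) (k : ℕ) : ℝ :=
  S.Lag (it.u k) (it.v k) (it.p k) + S.c1 * ‖it.u (k - 1) - it.u k‖ ^ 2
    + S.c2 * ‖it.v (k - 1) - it.v k‖ ^ 2 + 1 / (2 * S.gamma) * ‖it.p (k - 1) - it.p k‖ ^ 2

/-- `ξ_u^k` -/
def Iter.xiu (it : Iter S) (k : ℕ) : EuclideanSpace ℝ (Fin n) :=
  S.Gu (it.u (k + 1)) (it.v (k + 1)) - S.Gu (it.u k) (it.v k)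
    + (ContinuousLinearMap.adjoint (S.Omd (it.u (k + 1)) - S.Omd (it.u k))) (it.q k)
    + (ContinuousLinearMap.adjoint (S.Thd (it.u (k + 1)))) (it.p (k + 1) - it.p k)
    + S.gamma • (ContinuousLinearMap.adjoint (S.Thd (it.u (k + 1))))
        ((S.Th (it.u (k + 1)) + S.B (it.v (k + 1))) - (S.Th (it.u k) + S.B (it.v k)))
    - (1 / it.eps k) • (S.Kg (it.u (k + 1)) - S.Kg (it.u k))

/-- `ξ_v^k` -/
def Iter.xiv (it : Iter S) (k : ℕ) : EuclideanSpace ℝ (Fin d) :=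
  S.Gv (it.u (k + 1)) (it.v (k + 1)) - S.Gv (it.u k) (it.v k)
    + (S.Hg (it.v (k + 1)) - S.Hg (it.v k))
    + (ContinuousLinearMap.adjoint S.B) (it.p (k + 1) - it.p k)
    + S.gamma • (ContinuousLinearMap.adjoint S.B)
        ((S.Th (it.u (k + 1)) + S.B (it.v (k + 1))) - (S.Th (it.u k) + S.B (it.v k)))
    - S.gamma • (ContinuousLinearMap.adjoint S.B) (S.B (it.v (k + 1) - it.v k))

/-- the value-proximity error bound (VP-EB) at `(ub, vb, pb)` with constants `κ₁, η, ν`. -/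
def VPEB (it : Iter S) (Lstar κ₁ η ν : ℝ) (ub : EuclideanSpace ℝ (Fin n))
    (vb : EuclideanSpace ℝ (Fin d)) (pb : EuclideanSpace ℝ (Fin m)) : Prop :=
  ∀ k : ℕ, it.distTo (k + 1) ub vb pb < η →
    S.Lag (it.u (k + 1)) (it.v (k + 1)) (it.p (k + 1)) < Lstar + ν →
    S.Lag (it.u (k + 1)) (it.v (k + 1)) (it.p (k + 1)) - Lstar ≤ κ₁ * it.wsq k

end NAPP

open NAPP Filter


section Aux

open scoped RealInnerProductSpace

private theorem descent_abs {E : Type*} [NormedAddCommGroup E] [InnerProductSpace ℝ E]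
    [CompleteSpace E] (f : E → ℝ) (g : E → E) (L : ℝ)
    (hg : ∀ x, HasGradientAt f (g x) x) (hl : ∀ x y, ‖g x - g y‖ ≤ L * ‖x - y‖) (x y : E) :
    |f y - f x - ⟪g x, y - x⟫| ≤ L / 2 * ‖y - x‖ ^ 2 := by
  rcases eq_or_ne y x with rfl | hxy
  · simp
  have hL : 0 ≤ L := by
    have h := hl y x
    have h2 : (0:ℝ) < ‖y - x‖ := norm_pos_iff.mpr (sub_ne_zero.mpr hxy)
    nlinarith [norm_nonneg (g y - g x)]
  set δ := y - x with hδ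
  have hcont : Continuous g := by
    have : LipschitzWith L.toNNReal g := by
      refine LipschitzWith.of_dist_le_mul fun a b => ?_
      rw [dist_eq_norm, dist_eq_norm]
      exact (hl a b).trans (by gcongr; exact Real.le_coe_toNNReal L)
    exact this.continuous
  have hderiv : ∀ t ∈ Set.uIcc (0:ℝ) 1,
      HasDerivAt (fun t : ℝ => f (x + t • δ)) ⟪g (x + t • δ), δ⟫ t := by
    intro t _
    have hc : HasDerivAt (fun t : ℝ => x + t • δ) δ t := by
      simpa using ((hasDerivAt_id t).smul_const δ).const_add x
    have := ((hg (x + t • δ)).hasFDerivAt).comp_hasDerivAt t hc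
    simpa [InnerProductSpace.toDual_apply_apply, Function.comp_def] using this
  have hcont2 : Continuous fun t : ℝ => ⟪g (x + t • δ), δ⟫ :=
    Continuous.inner (hcont.comp (by continuity)) continuous_const
  have hint : ∫ t in (0:ℝ)..1, ⟪g (x + t • δ), δ⟫ = f y - f x := by
    have := intervalIntegral.integral_eq_sub_of_hasDerivAt hderiv
      (hcont2.intervalIntegrable 0 1)
    simpa [hδ] using this
  have hsplit : f y - f x - ⟪g x, δ⟫ = ∫ t in (0:ℝ)..1, (⟪g (x + t • δ), δ⟫ - ⟪g x, δ⟫) := by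
    rw [intervalIntegral.integral_sub (hcont2.intervalIntegrable 0 1)
      (intervalIntegrable_const), hint]
    simp
  rw [hsplit]
  have hboundInt : IntervalIntegrable (fun t : ℝ => L * t * ‖δ‖ ^ 2) MeasureTheory.volume 0 1 :=
    (by continuity : Continuous fun t : ℝ => L * t * ‖δ‖ ^ 2).intervalIntegrable 0 1
  have hb : ∀ t ∈ Set.uIoc (0:ℝ) 1,
      ‖⟪g (x + t • δ), δ⟫ - ⟪g x, δ⟫‖ ≤ L * t * ‖δ‖ ^ 2 := by
    intro t ht
    rw [Set.uIoc_of_le (by norm_num : (0:ℝ) ≤ 1)] at ht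
    have ht0 : 0 < t := ht.1
    calc ‖⟪g (x + t • δ), δ⟫ - ⟪g x, δ⟫‖ = ‖⟪g (x + t • δ) - g x, δ⟫‖ := by
          rw [← inner_sub_left]
      _ ≤ ‖g (x + t • δ) - g x‖ * ‖δ‖ := norm_inner_le_norm _ _
      _ ≤ (L * ‖(x + t • δ) - x‖) * ‖δ‖ := by gcongr; exact hl _ _
      _ = L * t * ‖δ‖ ^ 2 := by
          rw [add_sub_cancel_left, norm_smul, Real.norm_eq_abs, abs_of_pos ht0]; ring
  have hval : ∫ t in (0:ℝ)..1, L * t * ‖δ‖ ^ 2 = L / 2 * ‖δ‖ ^ 2 := by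
    rw [intervalIntegral.integral_mul_const, intervalIntegral.integral_const_mul,
      integral_id]
    ring
  have hfin := intervalIntegral.norm_integral_le_abs_of_norm_le
    (MeasureTheory.ae_restrict_of_forall_mem measurableSet_uIoc hb) hboundInt
  rw [hval, abs_of_nonneg (by positivity : (0:ℝ) ≤ L / 2 * ‖δ‖ ^ 2)] at hfin
  simpa [Real.norm_eq_abs] using hfin

private theorem coord_le_norm {m : ℕ} (q : EuclideanSpace ℝ (Fin m)) (j : Fin m) :
    |q j| ≤ ‖q‖ := by
  rw [← Real.sqrt_sq_eq_abs, EuclideanSpace.norm_eq]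
  apply Real.sqrt_le_sqrt
  have := Finset.single_le_sum (f := fun i => ‖q i‖ ^ 2)
    (fun i _ => by positivity) (Finset.mem_univ j)
  simpa [Real.norm_eq_abs, sq_abs] using this

end Aux

theorem stmt7 (n d m : ℕ) (S : NAPP n d m) (hS : S.Hyp) (it : Iter S) (k : ℕ) :
    ⟪S.Gu (it.u k) (it.v k), it.u (k + 1) - it.u k⟫ + S.J (it.u (k + 1)) - S.J (it.u k)
        + ⟪it.q k, S.Th (it.u (k + 1)) - S.Th (it.u k)⟫
      ≤ -(S.beta / (2 * it.eps k) - ‖it.q k‖ * S.LOm / 2) * ‖it.u k - it.u (k + 1)‖ ^ 2 := by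
  classical
  set a := it.u k with ha
  set b := it.u (k + 1) with hb
  have hε := it.epsPos k
  have hqdef : it.q k = it.p k + S.gamma • (S.Th (it.u k) + S.B (it.v k)) := rfl
  set q := it.q k with hq
  -- the Jacobian of Ω applied componentwise equals the inner product with the gradients
  have hjac : ∀ (j : Fin m) (u w : EuclideanSpace ℝ (Fin n)),
      (S.Omd u) w j = ⟪S.Omg j u, w⟫ := by
    intro j u w
    have h1 : HasFDerivAt (fun x => S.Om x j)
        ((EuclideanSpace.proj j : EuclideanSpace ℝ (Fin m) →L[ℝ] ℝ).comp (S.Omd u)) u :=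
      (EuclideanSpace.proj (𝕜 := ℝ) j).hasFDerivAt.comp u (hS.derivOm u)
    have h2 := (hS.gradOmj j u).hasFDerivAt
    have h3 : ((EuclideanSpace.proj j : EuclideanSpace ℝ (Fin m) →L[ℝ] ℝ).comp (S.Omd u))
        = (InnerProductSpace.toDual ℝ _ (S.Omg j u)) := h1.unique h2
    have h4 := congrArg (fun T : EuclideanSpace ℝ (Fin n) →L[ℝ] ℝ => T w) h3
    simpa [InnerProductSpace.toDual_apply_apply] using h4
  set r : EuclideanSpace ℝ (Fin m) := S.Om b - S.Om a - (S.Omd a) (b - a) with hr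
  have hrj : ∀ j : Fin m, |r j| ≤ S.LOmj j / 2 * ‖b - a‖ ^ 2 := by
    intro j
    have := descent_abs (fun x => S.Om x j) (S.Omg j) (S.LOmj j)
      (hS.gradOmj j) (hS.lipOmj j) a b
    have hrep : r j = S.Om b j - S.Om a j - ⟪S.Omg j a, b - a⟫ := by
      simp only [hr, PiLp.sub_apply, hjac]
    rw [hrep]
    exact this
  have hqr : ⟪q, r⟫ ≤ ‖q‖ * S.LOm / 2 * ‖b - a‖ ^ 2 := by
    have hinner : ⟪q, r⟫ = ∑ j, q j * r j := by
      simp [PiLp.inner_apply, RCLike.inner_apply, mul_comm]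
    rw [hinner]
    calc ∑ j, q j * r j ≤ ∑ j, ‖q‖ * (S.LOmj j / 2 * ‖b - a‖ ^ 2) := by
          apply Finset.sum_le_sum
          intro j _
          calc q j * r j ≤ |q j * r j| := le_abs_self _
            _ = |q j| * |r j| := abs_mul _ _
            _ ≤ ‖q‖ * (S.LOmj j / 2 * ‖b - a‖ ^ 2) :=
              mul_le_mul (coord_le_norm q j) (hrj j) (abs_nonneg _) (norm_nonneg _)
      _ = ‖q‖ * S.LOm / 2 * ‖b - a‖ ^ 2 := by
          rw [← Finset.mul_sum, ← Finset.sum_mul, ← Finset.sum_div]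
          simp only [NAPP.LOm]
          ring
  -- the minimization inequality at x = u^k
  have hmin := it.uMin k a (it.uMem k)
  rw [← hqdef, ← ha, ← hb] at hmin
  have hDaa : S.D a a = 0 := by simp [NAPP.D]
  have hDba : S.beta / 2 * ‖b - a‖ ^ 2 ≤ S.D b a := hS.strongK b a
  rw [hDaa] at hmin
  have hεinv : (0:ℝ) < 1 / it.eps k := by positivity
  have hDmul : (1 / it.eps k) * (S.beta / 2 * ‖b - a‖ ^ 2) ≤ (1 / it.eps k) * S.D b a :=
    mul_le_mul_of_nonneg_left hDba hεinv.le
  have hεeq : (1 / it.eps k) * (S.beta / 2 * ‖b - a‖ ^ 2)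
      = S.beta / (2 * it.eps k) * ‖b - a‖ ^ 2 := by
    rw [div_mul_eq_mul_div, one_mul, mul_comm (S.beta / 2), mul_div_assoc, div_div,
      mul_comm]
  -- decompose Θ(b) - Θ(a)
  have hTh : S.Th b - S.Th a = r + ((S.Omd a) b - (S.Omd a) a) + (S.Phi b - S.Phi a) := by
    simp only [NAPP.Th, hr, map_sub]
    abel
  have hexp : ⟪q, S.Th b - S.Th a⟫
      = ⟪q, r⟫ + (⟪q, (S.Omd a) b⟫ - ⟪q, (S.Omd a) a⟫) + (⟪q, S.Phi b⟫ - ⟪q, S.Phi a⟫) := by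
    rw [hTh]
    simp [inner_add_right, inner_sub_right]
  have hnsub : ‖a - b‖ = ‖b - a‖ := norm_sub_rev a b
  have hgoal : ⟪S.Gu a (it.v k), b - a⟫ = ⟪S.Gu a (it.v k), b⟫ - ⟪S.Gu a (it.v k), a⟫ :=
    inner_sub_right _ _ _
  rw [hexp, hgoal, hnsub]
  have hmin' : ⟪S.Gu a (it.v k), b⟫ + S.J b + (⟪q, (S.Omd a) b⟫ + ⟪q, S.Phi b⟫)
      + (1 / it.eps k) * S.D b a
      ≤ ⟪S.Gu a (it.v k), a⟫ + S.J a + (⟪q, (S.Omd a) a⟫ + ⟪q, S.Phi a⟫) := by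
    have e1 : ⟪q, (S.Omd a) b + S.Phi b⟫ = ⟪q, (S.Omd a) b⟫ + ⟪q, S.Phi b⟫ :=
      inner_add_right _ _ _
    have e2 : ⟪q, (S.Omd a) a + S.Phi a⟫ = ⟪q, (S.Omd a) a⟫ + ⟪q, S.Phi a⟫ :=
      inner_add_right _ _ _
    rw [← e1, ← e2]
    linarith [hmin]
  nlinarith [hmin', hqr, hDmul, hεeq]
end
end

section
/- For every k ≥ 0, ⟨∇_v G(u^k,v^k), v^{k+1} − v^k⟩ + H(v^{k+1}) − H(v^k) + ⟨q^k, B(v^{k+1} − v^k)⟩ ≤ −γ‖B(v^k − v^{k+1})‖² + (L_H/2)‖v^k − v^{k+1}‖². -/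
open scoped RealInnerProductSpace BigOperators
open Filter

noncomputable section

lemma descent_lemma {E : Type*} [NormedAddCommGroup E] [InnerProductSpace ℝ E] [CompleteSpace E]
    (H : E → ℝ) (Hg : E → E) (L : ℝ)
    (hgrad : ∀ v, HasGradientAt H (Hg v) v)
    (hlip : ∀ a b, ‖Hg a - Hg b‖ ≤ L * ‖a - b‖) (x y : E) :
    H y ≤ H x + ⟪Hg x, y - x⟫ + L / 2 * ‖y - x‖ ^ 2 := by
  set Δ := y - x with hΔ
  have hline : ∀ t : ℝ, HasDerivAt (fun s : ℝ => x + s • Δ) Δ t := by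
    intro t
    simpa using ((hasDerivAt_id t).smul_const Δ).const_add x
  have hH : ∀ t : ℝ, HasDerivAt (fun s : ℝ => H (x + s • Δ)) ⟪Hg (x + t • Δ), Δ⟫ t := by
    intro t
    have := ((hgrad (x + t • Δ)).hasFDerivAt).comp_hasDerivAt t (hline t)
    simpa [InnerProductSpace.toDual_apply_apply, Function.comp_def] using this
  set h : ℝ → ℝ := fun t => L / 2 * t ^ 2 * ‖Δ‖ ^ 2 - (H (x + t • Δ) - H x - t * ⟪Hg x, Δ⟫)
  have hderiv : ∀ t : ℝ, HasDerivAt h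
      (L * t * ‖Δ‖ ^ 2 - (⟪Hg (x + t • Δ), Δ⟫ - ⟪Hg x, Δ⟫)) t := by
    intro t
    have h1 : HasDerivAt (fun s : ℝ => L / 2 * s ^ 2 * ‖Δ‖ ^ 2) (L * t * ‖Δ‖ ^ 2) t := by
      have := ((hasDerivAt_pow 2 t).const_mul (L / 2)).mul_const (‖Δ‖ ^ 2)
      exact this.congr_deriv (by rw [show (2:ℕ) - 1 = 1 from rfl]; push_cast; ring)
    have h2 : HasDerivAt (fun s : ℝ => H (x + s • Δ) - H x - s * ⟪Hg x, Δ⟫)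
        (⟪Hg (x + t • Δ), Δ⟫ - ⟪Hg x, Δ⟫) t := by
      simpa [Pi.sub_def] using ((hH t).sub_const (H x)).sub ((hasDerivAt_id t).mul_const ⟪Hg x, Δ⟫)
    exact h1.sub h2
  have hmono : MonotoneOn h (Set.Icc (0:ℝ) 1) := by
    apply monotoneOn_of_deriv_nonneg (convex_Icc 0 1)
      (fun t _ => ((hderiv t).differentiableAt).continuousAt.continuousWithinAt)
      (fun t _ => ((hderiv t).differentiableAt).differentiableWithinAt)
    intro t ht
    rw [interior_Icc] at ht
    rw [(hderiv t).deriv]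
    have hb : ⟪Hg (x + t • Δ), Δ⟫ - ⟪Hg x, Δ⟫ ≤ L * t * ‖Δ‖ ^ 2 := by
      rw [← inner_sub_left]
      calc ⟪Hg (x + t • Δ) - Hg x, Δ⟫ ≤ ‖Hg (x + t • Δ) - Hg x‖ * ‖Δ‖ :=
            real_inner_le_norm _ _
        _ ≤ L * ‖(x + t • Δ) - x‖ * ‖Δ‖ := by
            have := hlip (x + t • Δ) x
            nlinarith [norm_nonneg Δ, norm_nonneg (Hg (x + t • Δ) - Hg x), norm_nonneg ((x + t • Δ) - x)]
        _ = L * t * ‖Δ‖ ^ 2 := by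
            rw [add_sub_cancel_left, norm_smul, Real.norm_eq_abs, abs_of_pos ht.1]; ring
    linarith
  have h01 := hmono (Set.left_mem_Icc.mpr zero_le_one) (Set.right_mem_Icc.mpr zero_le_one)
    zero_le_one
  simp only [h] at h01
  simp only [zero_smul, add_zero, zero_mul, one_smul, one_mul] at h01
  have hxy : x + Δ = y := by rw [hΔ]; abel
  rw [hxy] at h01
  nlinarith [h01]


open NAPP Filter

theorem stmt8 (n d m : ℕ) (S : NAPP n d m) (hS : S.Hyp) (it : Iter S) (k : ℕ) :
    ⟪S.Gv (it.u k) (it.v k), it.v (k + 1) - it.v k⟫ + S.H (it.v (k + 1)) - S.H (it.v k)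
        + ⟪it.q k, S.B (it.v (k + 1) - it.v k)⟫
      ≤ -(S.gamma * ‖S.B (it.v k - it.v (k + 1))‖ ^ 2)
        + S.LH / 2 * ‖it.v k - it.v (k + 1)‖ ^ 2 := by

  classical
  set Δ := it.v (k + 1) - it.v k with hΔ
  have hEq := it.vEq k
  have hinner : ⟪S.Gv (it.u k) (it.v k), Δ⟫ + ⟪S.Hg (it.v k), Δ⟫ + ⟪it.q k, S.B Δ⟫
      + S.gamma * ‖S.B Δ‖ ^ 2 = 0 := by
    have h0 := congrArg (fun z : EuclideanSpace ℝ (Fin d) => ⟪z, Δ⟫) hEq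
    simp only [inner_zero_left, inner_add_left, real_inner_smul_left,
      ContinuousLinearMap.adjoint_inner_left, real_inner_self_eq_norm_sq] at h0
    have hq : it.q k = it.p k + S.gamma • (S.Th (it.u k) + S.B (it.v k)) := rfl
    rw [hq, inner_add_left, real_inner_smul_left, inner_add_left]
    rw [← hΔ] at h0
    linarith [h0, congrArg (S.gamma * ·) (real_inner_self_eq_norm_sq (S.B Δ))]
  have hdesc : S.H (it.v (k + 1)) ≤ S.H (it.v k) + ⟪S.Hg (it.v k), Δ⟫
      + S.LH / 2 * ‖Δ‖ ^ 2 := by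
    simpa [← hΔ] using descent_lemma S.H S.Hg S.LH hS.gradH hS.lipH (it.v k) (it.v (k + 1))
  have hB : ‖S.B (it.v k - it.v (k + 1))‖ = ‖S.B Δ‖ := by
    rw [hΔ, map_sub, map_sub, ← norm_neg]; congr 1; abel
  have hv : ‖it.v k - it.v (k + 1)‖ = ‖Δ‖ := by rw [hΔ]; exact norm_sub_rev _ _
  rw [hB, hv]
  linarith [hinner, hdesc]
end
end
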